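/- Let (X,d) be a metric space, let f be a compatible unbounded modulus function, let (A_k) be a sequence in CL(X) and A ∈ CL(X). Then (A_k) is Wijsman f-statistically convergent to A if and only if (A_k) is Wijsman statistically convergent to A. -/
import Mathlib


open Filter Metric Set

/-- `f : ℝ → ℝ` is an (unbounded) modulus function (considered on `[0,∞)`):
`f x = 0 ↔ x = 0`, subadditive, increasing, continuous from the right at `0`,
and unbounded. -/
def IsModulus (f : ℝ → ℝ) : Prop :=
  (∀ x ∈ Set.Ici (0:ℝ), 0 ≤ f x) ∧
  (∀ x ∈ Set.Ici (0:ℝ), (f x = 0 ↔ x = 0)) ∧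
  (∀ x ∈ Set.Ici (0:ℝ), ∀ y ∈ Set.Ici (0:ℝ), f (x + y) ≤ f x + f y) ∧
  MonotoneOn f (Set.Ici (0:ℝ)) ∧
  ContinuousWithinAt f (Set.Ici (0:ℝ)) 0 ∧
  (∀ M : ℝ, ∃ x ∈ Set.Ici (0:ℝ), M < f x)

/-- `φ(ε) = limsup_n f(nε)/f(n)`. -/
noncomputable def modPhi (f : ℝ → ℝ) (ε : ℝ) : ℝ :=
  Filter.limsup (fun n : ℕ => f ((n : ℝ) * ε) / f (n : ℝ)) Filter.atTop

/-- A modulus function is compatible if `φ(ε) → 0` as `ε → 0⁺`. -/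
def Compatible (f : ℝ → ℝ) : Prop :=
  Filter.Tendsto (modPhi f) (nhdsWithin 0 (Set.Ioi 0)) (nhds 0)

/-- Wijsman statistical convergence of a sequence of subsets of a metric space. -/
def WijsmanStatConv {X : Type*} [MetricSpace X] (A : ℕ → Set X) (B : Set X) : Prop :=
  ∀ x : X, ∀ ε > (0:ℝ),
    Filter.Tendsto (fun n : ℕ =>
      (((Finset.range n).filter
        (fun j => ε < |infDist x (A j) - infDist x B|)).card : ℝ) / (n : ℝ))
      Filter.atTop (nhds 0)

/-- Wijsman `f`-statistical convergence of a sequence of subsets of a metric space. -/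
def WijsmanFStatConv {X : Type*} [MetricSpace X] (f : ℝ → ℝ) (A : ℕ → Set X)
    (B : Set X) : Prop :=
  ∀ x : X, ∀ ε > (0:ℝ),
    Filter.Tendsto (fun n : ℕ =>
      f ((((Finset.range n).filter
        (fun j => ε < |infDist x (A j) - infDist x B|)).card : ℝ)) / f (n : ℝ))
      Filter.atTop (nhds 0)

/-- A real sequence is `f`-strong Cesàro convergent to `L`. -/
def FStrongCesaro (f : ℝ → ℝ) (x : ℕ → ℝ) (L : ℝ) : Prop :=
  Filter.Tendsto (fun n : ℕ =>
    f (∑ j ∈ Finset.range n, |x j - L|) / f (n : ℝ)) Filter.atTop (nhds 0)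

/-- Wijsman `f`-strong Cesàro convergence. -/
def WijsmanFStrongCesaro {X : Type*} [MetricSpace X] (f : ℝ → ℝ) (A : ℕ → Set X)
    (B : Set X) : Prop :=
  ∀ x : X, FStrongCesaro f (fun j => infDist x (A j)) (infDist x B)

/-- Wijsman strong Cesàro convergence (the case `f = id`). -/
def WijsmanStrongCesaro {X : Type*} [MetricSpace X] (A : ℕ → Set X) (B : Set X) : Prop :=
  ∀ x : X,
    Filter.Tendsto (fun n : ℕ =>
      (∑ j ∈ Finset.range n, |infDist x (A j) - infDist x B|) / (n : ℝ))
      Filter.atTop (nhds 0)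

/-- A real sequence is uniformly integrable. -/
def UnifIntegrable (x : ℕ → ℝ) : Prop :=
  Filter.Tendsto (fun c : ℝ =>
    ⨆ n : ℕ, (∑ j ∈ Finset.range n, if c ≤ |x j| then |x j| else 0) / (n : ℝ))
    Filter.atTop (nhds 0)

/-- Wijsman uniform integrability. -/
def WijsmanUnifIntegrable {X : Type*} [MetricSpace X] (A : ℕ → Set X) : Prop :=
  ∀ x : X, UnifIntegrable (fun j => infDist x (A j))

/-- A lacunary sequence: strictly increasing, starting at `0`,
with gaps `h_r = k_{r+1} - k_r → ∞`. -/
def IsLacunary (k : ℕ → ℕ) : Prop :=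
  k 0 = 0 ∧ StrictMono k ∧
    Filter.Tendsto (fun r : ℕ => k (r + 1) - k r) Filter.atTop Filter.atTop

/-- The gaps `h_r` of a lacunary sequence. -/
def lacH (k : ℕ → ℕ) (r : ℕ) : ℕ := k (r + 1) - k r

/-- The blocks `I_r = (k_r, k_{r+1}]` of a lacunary sequence. -/
def lacI (k : ℕ → ℕ) (r : ℕ) : Finset ℕ := Finset.Ioc (k r) (k (r + 1))

/-- `φ_θ(ε) = limsup_t f(h_t ε)/f(h_t)`. -/
noncomputable def modPhiTheta (f : ℝ → ℝ) (k : ℕ → ℕ) (ε : ℝ) : ℝ :=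
  Filter.limsup (fun t : ℕ => f ((lacH k t : ℝ) * ε) / f ((lacH k t : ℝ))) Filter.atTop

/-- `f` is `θ`-compatible if `φ_θ(ε) → 0` as `ε → 0⁺`. -/
def ThetaCompatible (f : ℝ → ℝ) (k : ℕ → ℕ) : Prop :=
  Filter.Tendsto (modPhiTheta f k) (nhdsWithin 0 (Set.Ioi 0)) (nhds 0)

/-- Wijsman `θ`-lacunary statistical convergence. -/
def WijsmanLacStatConv {X : Type*} [MetricSpace X] (k : ℕ → ℕ) (A : ℕ → Set X)
    (B : Set X) : Prop :=
  ∀ x : X, ∀ ε > (0:ℝ),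
    Filter.Tendsto (fun r : ℕ =>
      (((lacI k r).filter
        (fun j => ε < |infDist x (A j) - infDist x B|)).card : ℝ) / (lacH k r : ℝ))
      Filter.atTop (nhds 0)

/-- Wijsman `θ`-lacunary `f`-statistical convergence. -/
def WijsmanLacFStatConv {X : Type*} [MetricSpace X] (f : ℝ → ℝ) (k : ℕ → ℕ)
    (A : ℕ → Set X) (B : Set X) : Prop :=
  ∀ x : X, ∀ ε > (0:ℝ),
    Filter.Tendsto (fun r : ℕ =>
      f ((((lacI k r).filter
        (fun j => ε < |infDist x (A j) - infDist x B|)).card : ℝ)) / f ((lacH k r : ℝ)))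
      Filter.atTop (nhds 0)

/-- Wijsman `θ`-lacunary `f`-strong Cesàro convergence. -/
def WijsmanLacFStrongCesaro {X : Type*} [MetricSpace X] (f : ℝ → ℝ) (k : ℕ → ℕ)
    (A : ℕ → Set X) (B : Set X) : Prop :=
  ∀ x : X,
    Filter.Tendsto (fun r : ℕ =>
      f (∑ j ∈ lacI k r, |infDist x (A j) - infDist x B|) / f ((lacH k r : ℝ)))
      Filter.atTop (nhds 0)

/-- Wijsman `θ`-lacunary strong Cesàro convergence (the case `f = id`). -/
def WijsmanLacStrongCesaro {X : Type*} [MetricSpace X] (k : ℕ → ℕ)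
    (A : ℕ → Set X) (B : Set X) : Prop :=
  ∀ x : X,
    Filter.Tendsto (fun r : ℕ =>
      (∑ j ∈ lacI k r, |infDist x (A j) - infDist x B|) / (lacH k r : ℝ))
      Filter.atTop (nhds 0)

/-- A real sequence is `θ`-lacunary uniformly integrable. -/
def LacUnifIntegrable (k : ℕ → ℕ) (x : ℕ → ℝ) : Prop :=
  Filter.Tendsto (fun M : ℝ =>
    ⨆ t : ℕ, (∑ j ∈ lacI k t, if M ≤ |x j| then |x j| else 0) / (lacH k t : ℝ))
    Filter.atTop (nhds 0)

/-- Wijsman `θ`-lacunary uniform integrability. -/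
def WijsmanLacUnifIntegrable {X : Type*} [MetricSpace X] (k : ℕ → ℕ)
    (A : ℕ → Set X) : Prop :=
  ∀ x : X, LacUnifIntegrable k (fun j => infDist x (A j))


theorem wijsman_fstat_iff_stat_of_compatible {X : Type*} [MetricSpace X]
    (f : ℝ → ℝ) (hf : IsModulus f) (hfc : Compatible f)
    (A : ℕ → Set X) (B : Set X)
    (hA : ∀ n, (A n).Nonempty ∧ IsClosed (A n)) (hB : B.Nonempty ∧ IsClosed B) :
    WijsmanFStatConv f A B ↔ WijsmanStatConv A B := by

  obtain ⟨hpos, hzero, hsub, hmono, _, _⟩ := hf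
  have hf0 : f 0 = 0 := (hzero 0 (Set.mem_Ici.mpr le_rfl)).2 rfl
  have hfmul : ∀ (m : ℕ) (x : ℝ), 0 ≤ x → f ((m : ℝ) * x) ≤ (m : ℝ) * f x := by
    intro m
    induction m with
    | zero => intro x hx; simp [hf0]
    | succ m ih =>
      intro x hx
      have h1 : ((m : ℝ) + 1) * x = (m : ℝ) * x + x := by ring
      push_cast
      rw [h1]
      calc f ((m:ℝ)*x + x) ≤ f ((m:ℝ)*x) + f x := hsub _ (Set.mem_Ici.mpr (by positivity)) _ (Set.mem_Ici.mpr hx)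
        _ ≤ (m:ℝ) * f x + f x := by linarith [ih x hx]
        _ = ((m:ℝ)+1) * f x := by ring
  have hf1 : 0 < f 1 :=
    lt_of_le_of_ne (hpos 1 (Set.mem_Ici.mpr zero_le_one))
      (fun h => one_ne_zero ((hzero 1 (Set.mem_Ici.mpr zero_le_one)).1 h.symm))
  have hfpos : ∀ x : ℝ, 1 ≤ x → 0 < f x := fun x hx =>
    lt_of_lt_of_le hf1 (hmono (Set.mem_Ici.mpr zero_le_one) (Set.mem_Ici.mpr (le_trans zero_le_one hx)) hx)
  constructor
  · -- f-stat → stat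
    intro h x ε hε
    have H := h x ε hε
    set c : ℕ → ℝ := fun n =>
      (((Finset.range n).filter
        (fun j => ε < |infDist x (A j) - infDist x B|)).card : ℝ) with hc
    have hcnn : ∀ n, 0 ≤ c n := fun n => by positivity
    have hcle : ∀ n : ℕ, c n ≤ (n : ℝ) := by
      intro n
      have := Finset.card_filter_le (Finset.range n)
        (fun j => ε < |infDist x (A j) - infDist x B|)
      simp only [hc]
      exact_mod_cast le_trans this (le_of_eq (Finset.card_range n))
    rw [tendsto_order]
    constructor
    · intro a ha
      filter_upwards with n
      exact lt_of_lt_of_le ha (by positivity)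
    · intro δ hδ
      set m : ℕ := ⌈1/δ⌉₊ with hm
      have hm1 : 1 ≤ m := Nat.one_le_ceil_iff.2 (by positivity)
      have hmδ : 1 ≤ (m : ℝ) * δ := by
        have : 1/δ ≤ (m : ℝ) := Nat.le_ceil _
        calc (1:ℝ) = (1/δ) * δ := by field_simp
          _ ≤ (m : ℝ) * δ := by nlinarith
      have hmpos : (0:ℝ) < m := by exact_mod_cast hm1
      have hev : ∀ᶠ n in atTop, f (c n) / f (n : ℝ) < 1 / m :=
        H.eventually (gt_mem_nhds (by positivity))
      filter_upwards [hev, Filter.eventually_ge_atTop 1] with n hn hn1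
      by_contra hcon
      push_neg at hcon
      have hn1' : (1:ℝ) ≤ (n:ℝ) := by exact_mod_cast hn1
      have h1 : δ * (n:ℝ) ≤ c n := by
        rw [le_div_iff₀ (by linarith : (0:ℝ) < (n:ℝ))] at hcon
        exact hcon
      have h2 : (n:ℝ) ≤ (m : ℝ) * c n := by
        calc (n:ℝ) = 1 * n := (one_mul _).symm
          _ ≤ ((m:ℝ) * δ) * n := by nlinarith
          _ = (m:ℝ) * (δ * n) := by ring
          _ ≤ (m:ℝ) * c n := by nlinarith
      have h3 : f (n:ℝ) ≤ (m:ℝ) * f (c n) := by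
        calc f (n:ℝ) ≤ f ((m:ℝ) * c n) :=
              hmono (Set.mem_Ici.mpr (by positivity)) (Set.mem_Ici.mpr (by positivity)) h2
          _ ≤ (m:ℝ) * f (c n) := hfmul m (c n) (hcnn n)
      have hfn : 0 < f (n:ℝ) := hfpos _ hn1'
      have : 1 / (m:ℝ) ≤ f (c n) / f (n:ℝ) := by
        rw [le_div_iff₀ hfn, div_mul_eq_mul_div, div_le_iff₀ hmpos]
        nlinarith
      linarith
  · -- stat → f-stat
    intro h x ε hε
    have H := h x ε hε
    set c : ℕ → ℝ := fun n =>
      (((Finset.range n).filter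
        (fun j => ε < |infDist x (A j) - infDist x B|)).card : ℝ) with hc
    have hcnn : ∀ n, 0 ≤ c n := fun n => by positivity
    rw [tendsto_order]
    constructor
    · intro a ha
      filter_upwards with n
      have h1 : 0 ≤ f (c n) := hpos _ (Set.mem_Ici.mpr (hcnn n))
      have h2 : 0 ≤ f (n:ℝ) := hpos _ (Set.mem_Ici.mpr (Nat.cast_nonneg n))
      exact lt_of_lt_of_le ha (div_nonneg h1 h2)
    · intro δ hδ
      -- choose ε' with 0 < ε' ≤ 1 and modPhi f ε' < δ
      have h1 : ∀ᶠ ε' in nhdsWithin (0:ℝ) (Set.Ioi 0), modPhi f ε' < δ :=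
        hfc.eventually (gt_mem_nhds hδ)
      have h2 : ∀ᶠ ε' in nhdsWithin (0:ℝ) (Set.Ioi 0), ε' < 1 :=
        eventually_nhdsWithin_of_eventually_nhds (eventually_lt_nhds one_pos)
      have h3 : ∀ᶠ ε' in nhdsWithin (0:ℝ) (Set.Ioi 0), ε' ∈ Set.Ioi (0:ℝ) :=
        eventually_mem_nhdsWithin
      obtain ⟨ε', hφ, hε'1, hε'0⟩ := (h1.and (h2.and h3)).exists
      have hε'pos : (0:ℝ) < ε' := hε'0
      -- the sequence f(nε')/f(n) is bounded above by 1
      have hbd : Filter.IsBoundedUnder (· ≤ ·) atTop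
          (fun n : ℕ => f ((n : ℝ) * ε') / f (n : ℝ)) := by
        refine isBoundedUnder_of ⟨1, fun n => ?_⟩
        rcases Nat.eq_zero_or_pos n with h0 | h0
        · simp [h0, hf0]
        · have hn1 : (1:ℝ) ≤ (n:ℝ) := by exact_mod_cast h0
          have hfn : 0 < f (n:ℝ) := hfpos _ hn1
          rw [div_le_one hfn]
          exact hmono (Set.mem_Ici.mpr (by positivity)) (Set.mem_Ici.mpr (Nat.cast_nonneg n))
            (by nlinarith)
      have hev1 : ∀ᶠ n : ℕ in atTop, f ((n:ℝ) * ε') / f (n:ℝ) < δ :=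
        Filter.eventually_lt_of_limsup_lt hφ hbd
      have hev2 : ∀ᶠ n : ℕ in atTop, c n / (n:ℝ) < ε' :=
        H.eventually (gt_mem_nhds hε'pos)
      filter_upwards [hev1, hev2, Filter.eventually_ge_atTop 1] with n hn1 hn2 hn3
      have hn1' : (1:ℝ) ≤ (n:ℝ) := by exact_mod_cast hn3
      have hfn : 0 < f (n:ℝ) := hfpos _ hn1'
      have hcε : c n ≤ (n:ℝ) * ε' := by
        rw [div_lt_iff₀ (by linarith)] at hn2
        nlinarith
      have : f (c n) ≤ f ((n:ℝ) * ε') :=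
        hmono (Set.mem_Ici.mpr (hcnn n)) (Set.mem_Ici.mpr (by positivity)) hcε
      calc f (c n) / f (n:ℝ) ≤ f ((n:ℝ) * ε') / f (n:ℝ) :=
            by gcongr
        _ < δ := hn1
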